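/- Let U_1,...,U_n be points in [0,1]^p, let H be a nonempty subset of {1,...,p}, and define T(t) = (1/√n) ∑_{i=1}^n ∏_{j∈H} (1_{U_{i,j} ≤ t_j} − t_j) for t in the cube [0,1]^H. Then ∫_{[0,1]^H} T(t)² dt = (1/n) ∑_{h=1}^n ∑_{i=1}^n ∏_{j∈H} ((U_{h,j}² + U_{i,j}²)/2 − max(U_{h,j}, U_{i,j}) + 1/3). -/

import Mathlib

open Finset MeasureTheory

noncomputable def tent (a x : ℝ) : ℝ := (if a ≤ x then (1 : ℝ) else 0) - x

lemma tent_meas (a : ℝ) : Measurable (tent a) := by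
  unfold tent
  exact (Measurable.ite measurableSet_Ici measurable_const measurable_const).sub measurable_id

lemma tent_abs_le (a : ℝ) {x : ℝ} (hx : x ∈ Set.Icc (0:ℝ) 1) : |tent a x| ≤ 2 := by
  obtain ⟨h0, h1⟩ := hx
  unfold tent
  split_ifs <;> rw [abs_le] <;> constructor <;> linarith

lemma oneD_ordered (a b : ℝ) (ha : a ∈ Set.Icc (0:ℝ) 1) (hb : b ∈ Set.Icc (0:ℝ) 1)
    (hab : a ≤ b) :
    ∫ x in Set.Icc (0:ℝ) 1, tent a x * tent b x
      = (a^2 + b^2)/2 - max a b + 1/3 := by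
  obtain ⟨ha0, ha1⟩ := ha
  obtain ⟨hb0, hb1⟩ := hb
  set F : ℝ → ℝ := fun x => ((if a < x then (1:ℝ) else 0) - x) * ((if b < x then (1:ℝ) else 0) - x)
    with hF
  have hae : (fun x => tent a x * tent b x) =ᵐ[volume] F := by
    have hsub : {x : ℝ | tent a x * tent b x ≠ F x} ⊆ {a, b} := by
      intro x hx
      by_contra hmem
      simp only [Set.mem_insert_iff, Set.mem_singleton_iff, not_or] at hmem
      apply hx
      have h1 : (a ≤ x) = (a < x) := by
        by_cases h : a ≤ x
        · simp [h, lt_of_le_of_ne h (Ne.symm hmem.1)]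
        · simp [h, le_of_not_ge h]
      have h2 : (b ≤ x) = (b < x) := by
        by_cases h : b ≤ x
        · simp [h, lt_of_le_of_ne h (Ne.symm hmem.2)]
        · simp [h, le_of_not_ge h]
      simp only [hF, tent, h1, h2]
    exact measure_mono_null hsub (((Set.finite_singleton b).insert a).measure_zero _)
  rw [MeasureTheory.integral_Icc_eq_integral_Ioc,
    integral_congr_ae (Filter.EventuallyEq.restrict hae)]
  have e1 : Set.EqOn F (fun x => x^2) (Set.Ioc 0 a) := by
    intro x hx
    obtain ⟨hx0, hxa⟩ := hx
    simp only [hF]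
    rw [if_neg (not_lt.2 hxa), if_neg (not_lt.2 (hxa.trans hab))]
    ring
  have e2 : Set.EqOn F (fun x => x^2 - x) (Set.Ioc a b) := by
    intro x hx
    obtain ⟨hxa, hxb⟩ := hx
    simp only [hF]
    rw [if_pos hxa, if_neg (not_lt.2 hxb)]
    ring
  have e3 : Set.EqOn F (fun x => 1 - 2*x + x^2) (Set.Ioc b 1) := by
    intro x hx
    obtain ⟨hxb, hx1⟩ := hx
    simp only [hF]
    rw [if_pos (lt_of_le_of_lt hab hxb), if_pos hxb]
    ring
  have i1 : IntegrableOn F (Set.Ioc 0 a) volume :=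
    (((continuous_pow 2).integrableOn_Ioc)).congr_fun e1.symm measurableSet_Ioc
  have i2 : IntegrableOn F (Set.Ioc a b) volume :=
    (((continuous_pow 2).sub continuous_id).integrableOn_Ioc).congr_fun e2.symm measurableSet_Ioc
  have i3 : IntegrableOn F (Set.Ioc b 1) volume :=
    ((by continuity : Continuous (fun x : ℝ => 1 - 2*x + x^2)).integrableOn_Ioc).congr_fun
      e3.symm measurableSet_Ioc
  have hsplit1 : Set.Ioc (0:ℝ) b = Set.Ioc 0 a ∪ Set.Ioc a b := (Set.Ioc_union_Ioc_eq_Ioc ha0 hab).symm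
  have hsplit2 : Set.Ioc (0:ℝ) 1 = Set.Ioc 0 b ∪ Set.Ioc b 1 :=
    (Set.Ioc_union_Ioc_eq_Ioc (ha0.trans hab) hb1).symm
  rw [hsplit2, setIntegral_union (Set.Ioc_disjoint_Ioc_of_le le_rfl) measurableSet_Ioc
      (by rw [hsplit1]; exact i1.union i2) i3,
    hsplit1, setIntegral_union (Set.Ioc_disjoint_Ioc_of_le le_rfl) measurableSet_Ioc i1 i2]
  rw [setIntegral_congr_fun measurableSet_Ioc e1,
    setIntegral_congr_fun measurableSet_Ioc e2,
    setIntegral_congr_fun measurableSet_Ioc e3]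
  rw [← intervalIntegral.integral_of_le ha0, ← intervalIntegral.integral_of_le hab,
    ← intervalIntegral.integral_of_le hb1]
  have hp : ∀ u v : ℝ, ∫ x in u..v, (x^2 : ℝ) = (v^3 - u^3)/3 := by
    intro u v
    rw [_root_.integral_pow]
    norm_num
  have hq : ∫ x in a..b, (x^2 - x : ℝ) = (b^3 - a^3)/3 - (b^2 - a^2)/2 := by
    rw [intervalIntegral.integral_sub (_root_.intervalIntegral.intervalIntegrable_pow 2)
      _root_.intervalIntegral.intervalIntegrable_id, _root_.integral_pow, _root_.integral_id]
    norm_num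
  have hr : ∫ x in b..1, (1 - 2*x + x^2 : ℝ) = (1 - b) - (1 - b^2) + (1 - b^3)/3 := by
    rw [intervalIntegral.integral_add ((by continuity : Continuous fun x : ℝ => 1 - 2*x).intervalIntegrable _ _)
      ((continuous_pow 2).intervalIntegrable _ _),
      intervalIntegral.integral_sub (continuous_const.intervalIntegrable _ _)
        ((by continuity : Continuous fun x : ℝ => 2*x).intervalIntegrable _ _),
      intervalIntegral.integral_const, intervalIntegral.integral_const_mul,
      _root_.integral_id, _root_.integral_pow]
    norm_num
    ring
  rw [hp, hq, hr, max_eq_right hab]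
  ring

lemma oneD (a b : ℝ) (ha : a ∈ Set.Icc (0:ℝ) 1) (hb : b ∈ Set.Icc (0:ℝ) 1) :
    ∫ x in Set.Icc (0:ℝ) 1, tent a x * tent b x
      = (a^2 + b^2)/2 - max a b + 1/3 := by
  rcases le_total a b with hab | hba
  · exact oneD_ordered a b ha hb hab
  · rw [integral_congr_ae (Filter.Eventually.of_forall fun x => mul_comm (tent a x) (tent b x)),
      oneD_ordered b a hb ha hba, max_comm]
    ring

theorem sq_norm_empirical_tent (n p : ℕ) (hn : 1 ≤ n) (hp : 1 ≤ p)
    (U : Fin n → Fin p → ℝ) (hU : ∀ i j, U i j ∈ Set.Icc (0 : ℝ) 1)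
    (H : Finset (Fin p)) (hH : H.Nonempty) :
    (∫ t in Set.univ.pi (fun _ : ↥H => Set.Icc (0 : ℝ) 1),
        ((1 / Real.sqrt n) * ∑ i : Fin n,
          ∏ j : ↥H, ((if U i j ≤ t j then (1 : ℝ) else 0) - t j)) ^ 2) =
      (1 / (n : ℝ)) * ∑ h : Fin n, ∑ i : Fin n,
        ∏ j ∈ H, ((U h j ^ 2 + U i j ^ 2) / 2 - max (U h j) (U i j) + 1 / 3) := by
  set S : Set (↥H → ℝ) := Set.univ.pi (fun _ : ↥H => Set.Icc (0 : ℝ) 1) with hSdef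
  have hS : MeasurableSet S := MeasurableSet.univ_pi (fun _ => measurableSet_Icc)
  -- pointwise expansion of the square
  have hpt : ∀ t : ↥H → ℝ,
      ((1 / Real.sqrt n) * ∑ i : Fin n, ∏ j : ↥H, ((if U i j ≤ t j then (1 : ℝ) else 0) - t j)) ^ 2
        = (1/(n:ℝ)) * ∑ h : Fin n, ∑ i : Fin n,
            ∏ j : ↥H, (tent (U h j) (t j) * tent (U i j) (t j)) := by
    intro t
    have h1 : ((1 : ℝ) / Real.sqrt n) ^ 2 = 1 / (n : ℝ) := by
      rw [div_pow, one_pow, Real.sq_sqrt (Nat.cast_nonneg n)]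
    rw [mul_pow, h1, sq, Finset.sum_mul_sum]
    congr 1
    apply Finset.sum_congr rfl; intro h _
    apply Finset.sum_congr rfl; intro i _
    rw [← Finset.prod_mul_distrib]
    rfl
  rw [setIntegral_congr_fun hS (fun t _ => hpt t)]
  -- indicator of a pi set is the product of coordinate indicators
  have ind_eq : ∀ q : ↥H → ℝ → ℝ,
      S.indicator (fun t => ∏ j : ↥H, q j (t j))
        = fun t => ∏ j : ↥H, (Set.Icc (0:ℝ) 1).indicator (q j) (t j) := by
    intro q
    funext t
    by_cases ht : t ∈ S
    · rw [Set.indicator_of_mem ht]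
      exact (Finset.prod_congr rfl fun j _ =>
        (Set.indicator_of_mem (ht j (Set.mem_univ j)) _).symm)
    · rw [Set.indicator_of_notMem ht]
      have hnot : ¬ ∀ j : ↥H, t j ∈ Set.Icc (0:ℝ) 1 := fun hall => ht (fun j _ => hall j)
      push_neg at hnot
      obtain ⟨j0, hj0⟩ := hnot
      exact (Finset.prod_eq_zero (Finset.mem_univ j0)
        (by rw [Set.indicator_of_notMem hj0])).symm
  -- integrability of each coordinate indicator
  have int1 : ∀ h i : Fin n, ∀ j : ↥H,
      Integrable ((Set.Icc (0:ℝ) 1).indicator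
        (fun x => tent (U h j) x * tent (U i j) x)) volume := by
    intro h i j
    rw [integrable_indicator_iff measurableSet_Icc]
    apply Measure.integrableOn_of_bounded (M := 4)
    · simp [Real.volume_Icc]
    · exact ((tent_meas _).mul (tent_meas _)).aestronglyMeasurable
    · filter_upwards [ae_restrict_mem measurableSet_Icc] with x hx
      have := tent_abs_le (U h j) hx
      have := tent_abs_le (U i j) hx
      calc ‖tent (U h j) x * tent (U i j) x‖
          = |tent (U h j) x| * |tent (U i j) x| := abs_mul _ _
        _ ≤ 2 * 2 := by
            apply mul_le_mul ‹_› ‹_› (abs_nonneg _) (by norm_num)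
        _ = 4 := by norm_num
  have intS : ∀ h i : Fin n,
      IntegrableOn (fun t : ↥H → ℝ => ∏ j : ↥H, (tent (U h j) (t j) * tent (U i j) (t j)))
        S volume := by
    intro h i
    refine (integrable_indicator_iff hS).1 ?_
    rw [ind_eq (fun j x => tent (U h j) x * tent (U i j) x)]
    exact Integrable.fintype_prod (fun j => int1 h i j)
  rw [integral_const_mul]
  rw [integral_finset_sum _ (fun h _ => integrable_finset_sum _ (fun i _ => intS h i))]
  congr 1
  apply Finset.sum_congr rfl; intro h _
  rw [integral_finset_sum _ (fun i _ => intS h i)]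
  apply Finset.sum_congr rfl; intro i _
  rw [← integral_indicator hS, ind_eq (fun j x => tent (U h j) x * tent (U i j) x),
    MeasureTheory.integral_fintype_prod_volume_eq_prod (ι := ↥H)
      (fun j => (Set.Icc (0:ℝ) 1).indicator (fun x => tent (U h j) x * tent (U i j) x))]
  rw [← Finset.prod_coe_sort H]
  apply Finset.prod_congr rfl
  intro j _
  rw [integral_indicator measurableSet_Icc, oneD _ _ (hU h j) (hU i j)]
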